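/- Let K be a field of characteristic not 2 and let τ be the K-automorphism of the rational function field K(x,y) of order 2 defined by τ(x) = a/x and τ(y) = a/y for a fixed a ∈ K^×. Then the fixed field K(x,y)^⟨τ⟩ equals K(t₁, t₂), where t₁ = (xy + a)/(x + y) and t₂ = (xy − a)/(x − y). -/

import Mathlib

open MvPolynomial IntermediateField

set_option maxHeartbeats 2000000 in
set_option synthInstance.maxHeartbeats 400000 in
/-- Lemma (HHR08): for the involution `τ : x ↦ a/x, y ↦ a/y` of `K(x,y)`
(`char K ≠ 2`, `a ∈ Kˣ`), the fixed field is `K(t₁,t₂)` with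
`t₁ = (xy+a)/(x+y)` and `t₂ = (xy-a)/(x-y)`. -/
theorem fixed_field_neg_I2 (K F : Type*) [Field K] [Field F]
    [Algebra K F] [Algebra (MvPolynomial (Fin 2) K) F]
    [IsScalarTower K (MvPolynomial (Fin 2) K) F]
    [IsFractionRing (MvPolynomial (Fin 2) K) F]
    (h2 : (2 : K) ≠ 0) (a : K) (ha : a ≠ 0)
    (x y : F)
    (hx : x = algebraMap (MvPolynomial (Fin 2) K) F (X 0))
    (hy : y = algebraMap (MvPolynomial (Fin 2) K) F (X 1))
    (σ : F ≃ₐ[K] F)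
    (hσx : σ x = algebraMap K F a / x)
    (hσy : σ y = algebraMap K F a / y) :
    fixedField (Subgroup.zpowers σ) =
      adjoin K {(x * y + algebraMap K F a) / (x + y),
                (x * y - algebraMap K F a) / (x - y)} := by
  classical
  set R := MvPolynomial (Fin 2) K with hR
  have hinj : Function.Injective (algebraMap R F) := IsFractionRing.injective R F
  set c : F := algebraMap K F a with hc
  have hcmap : c = algebraMap R F (MvPolynomial.C a) := by
    rw [hc, IsScalarTower.algebraMap_apply K R F, MvPolynomial.algebraMap_eq]
  have evalne : ∀ (p : R) (f : Fin 2 → K), eval f p ≠ 0 → algebraMap R F p ≠ 0 := by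
    intro p f hev hp
    have hp0 : p = 0 := hinj (by rw [hp, map_zero])
    rw [hp0, map_zero] at hev
    exact hev rfl
  -- basic nonvanishing facts
  have hxne : x ≠ 0 := by
    rw [hx]; exact evalne _ ![1, 1] (by simp)
  have hyne : y ≠ 0 := by
    rw [hy]; exact evalne _ ![1, 1] (by simp)
  have hsne : x + y ≠ 0 := by
    rw [hx, hy, ← map_add]; exact evalne _ ![1, 0] (by simp)
  have hdne : x - y ≠ 0 := by
    rw [hx, hy, ← map_sub]; exact evalne _ ![1, 0] (by simp)
  have hune : x * y - c ≠ 0 := by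
    rw [hx, hy, hcmap, ← map_mul, ← map_sub]
    exact evalne _ ![0, 0] (by simp [ha])
  have hx2 : x * x - c ≠ 0 := by
    rw [hx, hcmap, ← map_mul, ← map_sub]
    exact evalne _ ![0, 0] (by simp [ha])
  have hy2 : y * y - c ≠ 0 := by
    rw [hy, hcmap, ← map_mul, ← map_sub]
    exact evalne _ ![0, 0] (by simp [ha])
  have hcne : c ≠ 0 := by
    rw [hcmap]; exact evalne _ ![0, 0] (by simp [ha])
  have h2F : (2 : F) ≠ 0 := by
    have h := (map_ne_zero (algebraMap K F)).mpr h2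
    rwa [map_ofNat] at h
  have h4F : (4 : F) ≠ 0 := by
    have : (4 : F) = 2 * 2 := by norm_num
    rw [this]; exact mul_ne_zero h2F h2F
  have hσc : σ c = c := by rw [hc]; exact σ.commutes a
  -- the generators of the candidate fixed field
  set t₁ : F := (x * y + c) / (x + y) with ht₁
  set t₂ : F := (x * y - c) / (x - y) with ht₂
  have ht₂ne : t₂ ≠ 0 := div_ne_zero hune hdne
  have e₁ : t₁ * (x + y) = x * y + c := by rw [ht₁]; exact div_mul_cancel₀ _ hsne
  have e₂ : t₂ * (x - y) = x * y - c := by rw [ht₂]; exact div_mul_cancel₀ _ hdne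
  -- σ fixes t₁ and t₂
  have hσt₁ : σ t₁ = t₁ := by
    have h0 : c * y + x * c ≠ 0 := by
      have h' : c * y + x * c = c * (x + y) := by ring
      rw [h']; exact mul_ne_zero hcne hsne
    have hd1 : c / x + c / y ≠ 0 := by
      rw [div_add_div _ _ hxne hyne]
      exact div_ne_zero h0 (mul_ne_zero hxne hyne)
    rw [ht₁]
    simp only [map_div₀, map_add, map_mul, hσx, hσy, hσc]
    rw [div_eq_div_iff hd1 hsne]
    field_simp
    ring
  have hσt₂ : σ t₂ = t₂ := by
    have h0 : c * y - x * c ≠ 0 := by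
      have h' : c * y - x * c = -(c * (x - y)) := by ring
      rw [h']
      exact neg_ne_zero.mpr (mul_ne_zero hcne hdne)
    have hd1 : c / x - c / y ≠ 0 := by
      rw [div_sub_div _ _ hxne hyne]
      exact div_ne_zero h0 (mul_ne_zero hxne hyne)
    rw [ht₂]
    simp only [map_div₀, map_sub, map_mul, hσx, hσy, hσc]
    rw [div_eq_div_iff hd1 hdne]
    field_simp
    ring
  -- membership in the fixed field
  have hmemfix : ∀ t : F, σ t = t → t ∈ fixedField (Subgroup.zpowers σ) := by
    intro t ht
    rintro ⟨g, n, rfl⟩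
    show (σ ^ n) t = t
    have hN : ∀ m : ℕ, (σ ^ m) t = t := by
      intro m; induction m with
      | zero => simp
      | succ k ih => rw [pow_succ, AlgEquiv.mul_apply, ht]; exact ih
    obtain ⟨m, rfl | rfl⟩ := n.eq_nat_or_neg
    · rw [zpow_natCast]; exact hN m
    · rw [zpow_neg, zpow_natCast]
      show (σ ^ m).symm t = t
      conv_lhs => rw [← hN m]
      exact (σ ^ m).symm_apply_apply t
  set E : IntermediateField K F := adjoin K {t₁, t₂} with hE
  have hEL : E ≤ fixedField (Subgroup.zpowers σ) := by
    rw [hE, adjoin_le_iff]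
    rintro t (rfl | rfl)
    · exact hmemfix _ hσt₁
    · exact hmemfix _ hσt₂
  -- E-membership facts
  have hT1 : t₁ ∈ E := subset_adjoin K _ (Set.mem_insert _ _)
  have hT2 : t₂ ∈ E := subset_adjoin K _ (Set.mem_insert_of_mem _ rfl)
  have hcE : c ∈ E := by rw [hc]; exact IntermediateField.algebraMap_mem E a
  have h2E : (2 : F) ∈ E := by
    have h := IntermediateField.algebraMap_mem E (2 : K)
    rwa [map_ofNat] at h
  have h4E : (4 : F) ∈ E := by
    have h := IntermediateField.algebraMap_mem E (4 : K)
    rwa [map_ofNat] at h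
  -- K(x,y) = F
  have hxyT : adjoin K {x, y} = ⊤ := by
    rw [eq_top_iff]
    intro z _
    have hmem : ∀ p : R, algebraMap R F p ∈ adjoin K {x, y} := by
      intro p
      induction p using MvPolynomial.induction_on with
      | C k =>
          rw [← MvPolynomial.algebraMap_eq, ← IsScalarTower.algebraMap_apply]
          exact IntermediateField.algebraMap_mem _ k
      | add p q hp hq => rw [map_add]; exact add_mem hp hq
      | mul_X p i hp =>
          rw [map_mul]
          refine mul_mem hp ?_
          fin_cases i
          · show algebraMap R F (X 0) ∈ adjoin K {x, y}
            rw [← hx]; exact subset_adjoin K _ (Set.mem_insert _ _)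
          · show algebraMap R F (X 1) ∈ adjoin K {x, y}
            rw [← hy]; exact subset_adjoin K _ (Set.mem_insert_of_mem _ rfl)
    obtain ⟨p, q, hq0, rfl⟩ := IsFractionRing.div_surjective (A := R) z
    exact div_mem (hmem p) (hmem q)
  -- the quadratic relation satisfied by s = x + y over E
  have hquad : (t₂ ^ 2 - t₁ ^ 2) * (x + y) ^ 2 + (4 * c * t₁ - 4 * t₁ * t₂ ^ 2) * (x + y)
      + (4 * c * t₂ ^ 2 - 4 * c ^ 2) = 0 := by
    linear_combination (-(x + y) * t₁ - (x * y + c) + 4 * c - 4 * t₂ ^ 2) * e₁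
      + (t₂ * (x - y) + (x * y - c)) * e₂
  have hlead : t₂ ^ 2 - t₁ ^ 2 ≠ 0 := by
    intro h
    have hteq : t₂ ^ 2 = t₁ ^ 2 := sub_eq_zero.mp h
    have key : (x * y - c) ^ 2 * (x + y) ^ 2 = (x * y + c) ^ 2 * (x - y) ^ 2 := by
      calc (x * y - c) ^ 2 * (x + y) ^ 2 = (t₂ * (x - y)) ^ 2 * (x + y) ^ 2 := by rw [e₂]
        _ = t₂ ^ 2 * ((x - y) ^ 2 * (x + y) ^ 2) := by ring
        _ = t₁ ^ 2 * ((x - y) ^ 2 * (x + y) ^ 2) := by rw [hteq]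
        _ = (t₁ * (x + y)) ^ 2 * (x - y) ^ 2 := by ring
        _ = (x * y + c) ^ 2 * (x - y) ^ 2 := by rw [e₁]
    have hz : (4 : F) * (x * y) * ((x * x - c) * (y * y - c)) = 0 := by
      linear_combination key
    rcases mul_eq_zero.mp hz with h' | h'
    · rcases mul_eq_zero.mp h' with h'' | h''
      · exact h4F h''
      · rcases mul_eq_zero.mp h'' with h3 | h3
        · exact hxne h3
        · exact hyne h3
    · rcases mul_eq_zero.mp h' with h'' | h''
      · exact hx2 h''
      · exact hy2 h''
  -- the quadratic polynomial over E
  set l : ↥E := ⟨t₂ ^ 2 - t₁ ^ 2, sub_mem (pow_mem hT2 2) (pow_mem hT1 2)⟩ with hl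
  set b : ↥E := ⟨4 * c * t₁ - 4 * t₁ * t₂ ^ 2,
    sub_mem (mul_mem (mul_mem h4E hcE) hT1) (mul_mem (mul_mem h4E hT1) (pow_mem hT2 2))⟩ with hb
  set c0 : ↥E := ⟨4 * c * t₂ ^ 2 - 4 * c ^ 2,
    sub_mem (mul_mem (mul_mem h4E hcE) (pow_mem hT2 2)) (mul_mem h4E (pow_mem hcE 2))⟩ with hc0
  have hlne : l ≠ 0 := by
    intro h
    apply hlead
    exact congrArg Subtype.val h
  set p : Polynomial ↥E := Polynomial.C l * Polynomial.X ^ 2 + Polynomial.C b * Polynomial.X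
      + Polynomial.C c0 with hp
  have hpdeg : p.degree = 2 := Polynomial.degree_quadratic hlne
  have hp0 : p ≠ 0 := by
    intro h
    rw [h, Polynomial.degree_zero] at hpdeg
    exact absurd hpdeg (by decide)
  have haev : Polynomial.aeval (x + y) p = 0 := by
    rw [hp]
    simp only [map_add, map_mul, Polynomial.aeval_C, Polynomial.aeval_X, map_pow]
    show (t₂ ^ 2 - t₁ ^ 2) * (x + y) ^ 2 + (4 * c * t₁ - 4 * t₁ * t₂ ^ 2) * (x + y)
      + (4 * c * t₂ ^ 2 - 4 * c ^ 2) = 0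
    exact hquad
  have halg : IsAlgebraic ↥E (x + y) := ⟨p, hp0, haev⟩
  have hint : IsIntegral ↥E (x + y) := halg.isIntegral
  -- E(s) = F
  have hsA : (x + y) ∈ adjoin ↥E {x + y} := subset_adjoin ↥E _ rfl
  have hEA : ∀ z, z ∈ E → z ∈ adjoin ↥E {x + y} := by
    intro z hz
    exact (adjoin ↥E {x + y}).algebraMap_mem ⟨z, hz⟩
  have hd2 : x - y = (t₁ * (x + y) - 2 * c) / t₂ := by
    rw [eq_div_iff ht₂ne]
    linear_combination e₂ - e₁
  have hdA : x - y ∈ adjoin ↥E {x + y} := by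
    rw [hd2]
    exact div_mem (sub_mem (mul_mem (hEA t₁ hT1) hsA) (mul_mem (hEA 2 h2E) (hEA c hcE)))
      (hEA t₂ hT2)
  have hxA : x ∈ adjoin ↥E {x + y} := by
    have hxe : x = ((x + y) + (x - y)) / 2 := by
      rw [eq_div_iff h2F]; ring
    have h' := div_mem (add_mem hsA hdA) (hEA 2 h2E)
    rwa [← hxe] at h'
  have hyA : y ∈ adjoin ↥E {x + y} := by
    have hye : y = ((x + y) - (x - y)) / 2 := by
      rw [eq_div_iff h2F]; ring
    have h' := div_mem (sub_mem hsA hdA) (hEA 2 h2E)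
    rwa [← hye] at h'
  have hST : adjoin ↥E {x + y} = ⊤ := by
    rw [eq_top_iff]
    intro z _
    have hz : z ∈ adjoin K {x, y} := hxyT ▸ mem_top
    have hle : adjoin K {x, y} ≤ (adjoin ↥E {x + y}).restrictScalars K := by
      rw [adjoin_le_iff]
      rintro w (rfl | rfl)
      · exact hxA
      · exact hyA
    exact hle hz
  -- F is finite dimensional over E of degree ≤ 2
  have hfd1 : FiniteDimensional ↥E ↥(adjoin ↥E {x + y}) := adjoin.finiteDimensional hint
  rw [hST] at hfd1
  haveI hfdE : FiniteDimensional ↥E F := by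
    haveI := hfd1
    exact LinearEquiv.finiteDimensional (topEquiv (F := ↥E) (E := F)).toLinearEquiv
  have hrankE : Module.finrank ↥E F ≤ 2 := by
    have h1 : Module.finrank ↥E ↥(adjoin ↥E {x + y}) = (minpoly ↥E (x + y)).natDegree :=
      adjoin.finrank hint
    rw [hST, IntermediateField.finrank_top'] at h1
    rw [h1]
    exact Polynomial.natDegree_le_iff_degree_le.mpr
      (le_trans (minpoly.degree_le_of_ne_zero ↥E (x + y) hp0 haev) (le_of_eq hpdeg))
  -- σ is an involution, ≠ 1
  have hkey : ∀ z : F, σ (σ z) = z := by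
    have hhom : (σ.toAlgHom.toRingHom.comp σ.toAlgHom.toRingHom) = RingHom.id F := by
      apply IsLocalization.ringHom_ext (nonZeroDivisors R)
      apply MvPolynomial.ringHom_ext
      · intro k
        have hck : algebraMap R F (MvPolynomial.C k) = algebraMap K F k := by
          rw [← MvPolynomial.algebraMap_eq, ← IsScalarTower.algebraMap_apply]
        simp only [RingHom.coe_comp, Function.comp_apply, RingHom.id_apply,
          AlgHom.coe_toRingHom, AlgEquiv.coe_algHom, hck]
        show σ (σ (algebraMap K F k)) = algebraMap K F k
        rw [σ.commutes, σ.commutes]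
      · intro i
        simp only [RingHom.coe_comp, Function.comp_apply, RingHom.id_apply,
          AlgHom.coe_toRingHom, AlgEquiv.coe_algHom]
        fin_cases i
        · show σ (σ (algebraMap R F (X 0))) = algebraMap R F (X 0)
          rw [← hx, hσx, map_div₀, hσc, hσx]
          field_simp
        · show σ (σ (algebraMap R F (X 1))) = algebraMap R F (X 1)
          rw [← hy, hσy, map_div₀, hσc, hσy]
          field_simp
    intro z
    exact RingHom.congr_fun hhom z
  have hσ2 : σ ^ 2 = 1 := by
    ext z
    rw [pow_two, AlgEquiv.mul_apply, hkey z, AlgEquiv.one_apply]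
  have hσ1 : σ ≠ 1 := by
    intro h
    have hσxx : σ x = x := by rw [h]; rfl
    rw [hσx] at hσxx
    rw [div_eq_iff hxne] at hσxx
    exact hx2 (by rw [hσxx]; ring)
  have hord : orderOf σ = 2 := orderOf_eq_prime hσ2 hσ1
  have hfo : IsOfFinOrder σ := by rw [← orderOf_pos_iff, hord]; norm_num
  haveI : Finite ↥(Subgroup.zpowers σ) := hfo.finite_zpowers
  haveI : Fintype ↥(Subgroup.zpowers σ) := Fintype.ofFinite _
  have hrankL : Module.finrank ↥(fixedField (Subgroup.zpowers σ)) F = 2 := by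
    have h1 := FixedPoints.finrank_eq_card (Subgroup.zpowers σ) F
    rw [Fintype.card_eq_nat_card, Nat.card_zpowers, hord] at h1
    exact h1
  -- conclude by the tower law
  set L' := extendScalars hEL with hL'
  haveI : FiniteDimensional ↥E ↥L' := FiniteDimensional.left ↥E ↥L' F
  have hmul : Module.finrank ↥E ↥L' * Module.finrank ↥L' F = Module.finrank ↥E F :=
    Module.finrank_mul_finrank ↥E ↥L' F
  have hL'F : Module.finrank ↥L' F = 2 := hrankL
  have hpos : 0 < Module.finrank ↥E ↥L' := Module.finrank_pos
  rw [hL'F] at hmul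
  have h1 : Module.finrank ↥E ↥L' = 1 := by omega
  have hbot : L' = ⊥ := finrank_eq_one_iff.mp h1
  have hfinal := congrArg (restrictScalars K) hbot
  rw [hL', extendScalars_restrictScalars, restrictScalars_bot_eq_self] at hfinal
  exact hfinal
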